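/- For every integer N ≥ 2, the sum of gcd(c, N) over c from 1 to N − 1 is at most 2(N − 1)√N. -/

import Mathlib

open Finset

lemma card_divisors_le (N : ℕ) (hN : N ≠ 0) :
    N.divisors.card ≤ 2 * Nat.sqrt N := by
  classical
  set s := N.divisors.filter (· ≤ Nat.sqrt N) with hs
  set t := N.divisors.filter (fun d => ¬ d ≤ Nat.sqrt N) with ht
  have hsplit : N.divisors.card = s.card + t.card := (card_filter_add_card_filter_not _).symm
  have hscard : s.card ≤ Nat.sqrt N := by
    have hsub : s ⊆ Finset.Icc 1 (Nat.sqrt N) := by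
      intro d hd
      simp only [hs, mem_filter] at hd
      exact Finset.mem_Icc.2 ⟨Nat.pos_of_mem_divisors hd.1, hd.2⟩
    calc s.card ≤ (Finset.Icc 1 (Nat.sqrt N)).card := card_le_card hsub
      _ = Nat.sqrt N := by simp
  have htcard : t.card ≤ s.card := by
    apply Finset.card_le_card_of_injOn (fun d => N / d)
    · intro d hd
      simp only [ht, mem_coe, mem_filter, not_le] at hd
      obtain ⟨hmem, hlt⟩ := hd
      have hdvd : d ∣ N := Nat.dvd_of_mem_divisors hmem
      simp only [hs, mem_coe, mem_filter]
      refine ⟨Nat.mem_divisors.2 ⟨Nat.div_dvd_of_dvd hdvd, hN⟩, ?_⟩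
      by_contra hcon
      push_neg at hcon
      have h1 : Nat.sqrt N + 1 ≤ d := hlt
      have h2 : Nat.sqrt N + 1 ≤ N / d := hcon
      have h3 : (Nat.sqrt N + 1) * (Nat.sqrt N + 1) ≤ d * (N / d) := Nat.mul_le_mul h1 h2
      rw [Nat.mul_div_cancel' hdvd] at h3
      have h4 : N < (Nat.sqrt N + 1) * (Nat.sqrt N + 1) := Nat.lt_succ_sqrt N
      exact absurd h3 (not_le.2 h4)
    · intro a ha b hb hab
      simp only [ht, coe_filter, Set.mem_setOf_eq] at ha hb
      have hda : a ∣ N := Nat.dvd_of_mem_divisors ha.1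
      have hdb : b ∣ N := Nat.dvd_of_mem_divisors hb.1
      have h1 : N / (N / a) = N / (N / b) := by
        simp only at hab
        rw [hab]
      rwa [Nat.div_div_self hda hN, Nat.div_div_self hdb hN] at h1
  omega

theorem gcd_sum_le (N : ℕ) (hN : 2 ≤ N) :
    ((∑ c ∈ Finset.Icc 1 (N - 1), Nat.gcd c N : ℕ) : ℝ) ≤
      2 * ((N : ℝ) - 1) * Real.sqrt N := by
  classical
  have hN0 : N ≠ 0 := by omega
  have hN1 : (1:ℝ) ≤ (N:ℝ) := by exact_mod_cast (by omega : 1 ≤ N)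
  have key : (∑ c ∈ Finset.Icc 1 (N - 1), Nat.gcd c N) ≤ (N - 1) * N.divisors.card := by
    have hmap : ∀ c ∈ Finset.Icc 1 (N - 1), Nat.gcd c N ∈ N.divisors :=
      fun c _ => Nat.mem_divisors.2 ⟨Nat.gcd_dvd_right _ _, hN0⟩
    rw [← Finset.sum_fiberwise_of_maps_to hmap]
    rw [Finset.card_eq_sum_ones N.divisors, Finset.mul_sum]
    apply Finset.sum_le_sum
    intro d hd
    have hsub : (Finset.Icc 1 (N-1)).filter (fun c => Nat.gcd c N = d) ⊆
        (Finset.Ioc 0 (N-1)).filter (fun c => d ∣ c) := by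
      intro c hc
      simp only [Finset.mem_filter, Finset.mem_Icc, Finset.mem_Ioc] at hc ⊢
      exact ⟨⟨hc.1.1, hc.1.2⟩, hc.2 ▸ Nat.gcd_dvd_left _ _⟩
    calc ∑ c ∈ (Finset.Icc 1 (N-1)).filter (fun c => Nat.gcd c N = d), Nat.gcd c N
        = ∑ c ∈ (Finset.Icc 1 (N-1)).filter (fun c => Nat.gcd c N = d), d := by
          apply Finset.sum_congr rfl; intro c hc; exact (Finset.mem_filter.1 hc).2
      _ = ((Finset.Icc 1 (N-1)).filter (fun c => Nat.gcd c N = d)).card * d := by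
          rw [Finset.sum_const, smul_eq_mul]
      _ ≤ ((Finset.Ioc 0 (N-1)).filter (fun c => d ∣ c)).card * d :=
          Nat.mul_le_mul_right _ (Finset.card_le_card hsub)
      _ = ((N-1) / d) * d := by rw [Nat.Ioc_filter_dvd_card_eq_div]
      _ ≤ N - 1 := Nat.div_mul_le_self _ _
      _ = (N - 1) * 1 := (mul_one _).symm
  have h1 : ((∑ c ∈ Finset.Icc 1 (N - 1), Nat.gcd c N : ℕ) : ℝ)
      ≤ ((N : ℝ) - 1) * N.divisors.card := by
    calc ((∑ c ∈ Finset.Icc 1 (N - 1), Nat.gcd c N : ℕ) : ℝ)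
        ≤ (((N - 1) * N.divisors.card : ℕ) : ℝ) := by exact_mod_cast key
      _ = ((N : ℝ) - 1) * N.divisors.card := by
          push_cast [Nat.cast_sub (by omega : 1 ≤ N)]; ring
  have h2 : (N.divisors.card : ℝ) ≤ 2 * Real.sqrt N := by
    calc (N.divisors.card : ℝ) ≤ ((2 * Nat.sqrt N : ℕ) : ℝ) := by
          exact_mod_cast card_divisors_le N hN0
      _ = 2 * (Nat.sqrt N : ℝ) := by push_cast; ring
      _ ≤ 2 * Real.sqrt N := by
          gcongr
          exact Real.nat_sqrt_le_real_sqrt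
  calc ((∑ c ∈ Finset.Icc 1 (N - 1), Nat.gcd c N : ℕ) : ℝ)
      ≤ ((N : ℝ) - 1) * N.divisors.card := h1
    _ ≤ ((N : ℝ) - 1) * (2 * Real.sqrt N) :=
        mul_le_mul_of_nonneg_left h2 (by linarith)
    _ = 2 * ((N : ℝ) - 1) * Real.sqrt N := by ring
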